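/- Let (Ω, ℱ, ℙ) be a probability space and 𝒢 ⊆ ℱ a sub-σ-algebra. Let d ∈ ℕ, M_J ≥ 0, β ∈ (0,1], λ ≥ 0, η > 0 and D₁, D_{1+β}, D₂ ≥ 0. Let J : ℝ^d → ℝ be differentiable, bounded (|J(x)| ≤ J_max for all x), and satisfying the smoothness inequality |J(x) − J(y) − ⟨∇J(y), x − y⟩| ≤ M_J·(‖x − y‖^{1+β} + ‖x − y‖² + λ‖x − y‖) for all x, y ∈ ℝ^d. Let θ : Ω → ℝ^d be 𝒢-measurable and let g : Ω → ℝ^d be square-integrable with 𝔼[g | 𝒢] = ∇J(θ) almost surely, 𝔼[‖g‖ | 𝒢] ≤ D₁, 𝔼[‖g‖^{1+β} | 𝒢] ≤ D_{1+β} and 𝔼[‖g‖² | 𝒢] ≤ D₂ almost surely. Then, almost surely, 𝔼[J(θ + η·g) | 𝒢] ≥ J(θ) + η·‖∇J(θ)‖² − M_J·(η^{1+β}·D_{1+β} + η²·D₂ + η·λ·D₁). -/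

import Mathlib

open MeasureTheory
open scoped RealInnerProductSpace ENNReal

lemma stmt6_condexp_clm {α E : Type*} [NormedAddCommGroup E] [NormedSpace ℝ E] [CompleteSpace E]
    {m m0 : MeasurableSpace α} {μ : Measure α} (hm : m ≤ m0) [SigmaFinite (μ.trim hm)]
    (L : E →L[ℝ] ℝ) {f : α → E} (hf : Integrable f μ) :
    (fun ω => L ((μ[f|m]) ω)) =ᵐ[μ] μ[fun ω => L (f ω)|m] := by
  refine ae_eq_condExp_of_forall_setIntegral_eq hm (L.integrable_comp hf)
    (fun s _ _ => (L.integrable_comp integrable_condExp).integrableOn)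
    (fun s hs hμs => ?_)
    ((L.continuous.comp_stronglyMeasurable stronglyMeasurable_condExp).aestronglyMeasurable)
  rw [L.integral_comp_comm integrable_condExp.integrableOn,
      L.integral_comp_comm hf.integrableOn, setIntegral_condExp hm hf hs]

lemma stmt6_coord_le_norm {d : ℕ} (x : EuclideanSpace ℝ (Fin d)) (i : Fin d) : |x i| ≤ ‖x‖ := by
  rw [EuclideanSpace.norm_eq, ← Real.sqrt_sq_eq_abs]
  apply Real.sqrt_le_sqrt
  have : x i ^ 2 = ‖x i‖ ^ 2 := by rw [Real.norm_eq_abs, sq_abs]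
  rw [this]
  exact Finset.single_le_sum (f := fun j => ‖x j‖ ^ 2) (fun j _ => sq_nonneg _) (Finset.mem_univ i)

lemma stmt6_sum_mul_self {d : ℕ} (x : EuclideanSpace ℝ (Fin d)) :
    ∑ i, x i * x i = ‖x‖ ^ 2 := by
  rw [← real_inner_self_eq_norm_sq]
  rw [PiLp.inner_apply]
  simp only [RCLike.inner_apply, conj_trivial]

/-- Single-step expected ascent inequality (from the proof of the paper's Theorem 1):
under the smoothness inequality for `J`, a `𝒢`-measurable iterate `θ` and a
square-integrable stochastic gradient `g` with `𝔼[g|𝒢] = ∇J(θ)` and conditional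
moment bounds `D₁, D_{1+β}, D₂`, one has a.s.
`𝔼[J(θ+ηg)|𝒢] ≥ J(θ) + η‖∇J(θ)‖² - M_J(η^{1+β}D_{1+β} + η²D₂ + ηλD₁)`. -/
theorem stmt6 {Ω : Type*} {mΩ : MeasurableSpace Ω} (P : Measure Ω) [IsProbabilityMeasure P]
    (𝒢 : MeasurableSpace Ω) (h𝒢 : 𝒢 ≤ mΩ)
    (d : ℕ) (MJ β lam η D₁ D1β D₂ Jmax : ℝ)
    (hMJ : 0 ≤ MJ) (hβ : β ∈ Set.Ioc (0 : ℝ) 1) (hlam : 0 ≤ lam) (hη : 0 < η)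
    (hD₁ : 0 ≤ D₁) (hD1β : 0 ≤ D1β) (hD₂ : 0 ≤ D₂)
    (J : EuclideanSpace ℝ (Fin d) → ℝ)
    (J' : EuclideanSpace ℝ (Fin d) → EuclideanSpace ℝ (Fin d))
    (hJdiff : ∀ x, HasGradientAt J (J' x) x)
    (hJbdd : ∀ x, |J x| ≤ Jmax)
    (hsmooth : ∀ x y : EuclideanSpace ℝ (Fin d),
      |J x - J y - ⟪J' y, x - y⟫|
        ≤ MJ * (‖x - y‖ ^ (1 + β) + ‖x - y‖ ^ 2 + lam * ‖x - y‖))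
    (θ : Ω → EuclideanSpace ℝ (Fin d)) (hθ : Measurable[𝒢] θ)
    (g : Ω → EuclideanSpace ℝ (Fin d)) (hg : MemLp g 2 P)
    (hgmean : P[g | 𝒢] =ᵐ[P] fun ω => J' (θ ω))
    (hg1 : ∀ᵐ ω ∂P, (P[fun ω' => ‖g ω'‖ | 𝒢]) ω ≤ D₁)
    (hg1β : ∀ᵐ ω ∂P, (P[fun ω' => ‖g ω'‖ ^ (1 + β) | 𝒢]) ω ≤ D1β)
    (hg2 : ∀ᵐ ω ∂P, (P[fun ω' => ‖g ω'‖ ^ 2 | 𝒢]) ω ≤ D₂) :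
    ∀ᵐ ω ∂P,
      J (θ ω) + η * ‖J' (θ ω)‖ ^ 2
          - MJ * (η ^ (1 + β) * D1β + η ^ 2 * D₂ + η * lam * D₁)
        ≤ (P[fun ω' => J (θ ω' + η • g ω') | 𝒢]) ω := by
  obtain ⟨hβ0, hβ1⟩ := hβ
  have h1β : (0:ℝ) < 1 + β := by linarith
  have hJmax : 0 ≤ Jmax := le_trans (abs_nonneg _) (hJbdd 0)
  set C : ℝ := 2 * Jmax + MJ * (2 + lam) with hCdef
  have hC0 : 0 ≤ C := by nlinarith
  -- gradient is globally bounded by C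
  have hgrad : ∀ y, ‖J' y‖ ≤ C := by
    intro y
    rcases eq_or_ne (J' y) 0 with h0 | h0
    · simp [h0, hC0]
    · set v : EuclideanSpace ℝ (Fin d) := ‖J' y‖⁻¹ • J' y with hv
      have hvn : ‖v‖ = 1 := norm_smul_inv_norm h0
      have h := hsmooth (y + v) y
      rw [add_sub_cancel_left, hvn] at h
      have hiv : ⟪J' y, v⟫ = ‖J' y‖ := by
        rw [hv, real_inner_smul_right, real_inner_self_eq_norm_sq, sq,
          inv_mul_cancel_left₀ (norm_ne_zero_iff.mpr h0)]
      rw [hiv, Real.one_rpow] at h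
      have h2 := abs_le.mp h
      have h3 := abs_le.mp (hJbdd (y + v))
      have h4 := abs_le.mp (hJbdd y)
      simp only [hCdef]
      nlinarith [h2.1, h2.2, h3.1, h3.2, h4.1, h4.2]
  -- measurability and integrability basics
  haveI : SigmaFinite (P.trim h𝒢) := inferInstance
  have hθm : Measurable[mΩ] θ := fun s hs => h𝒢 _ (hθ hs)
  have hJcont : Continuous J := continuous_iff_continuousAt.mpr fun x => (hJdiff x).continuousAt
  have hgm : AEStronglyMeasurable[mΩ] g P := hg.aestronglyMeasurable
  have hgint : Integrable g P := hg.integrable one_le_two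
  have hgn1 : Integrable (fun ω => ‖g ω‖) P := hgint.norm
  have hgn2 : Integrable (fun ω => ‖g ω‖ ^ 2) P := by
    have h := hg.norm_rpow two_ne_zero ENNReal.ofNat_ne_top
    refine (integrable_congr ?_).mp (memLp_one_iff_integrable.mp h)
    filter_upwards with ω
    rw [show ((2:ℝ≥0∞).toReal) = ((2:ℕ):ℝ) by norm_num, Real.rpow_natCast]
  have hgnβ : Integrable (fun ω => ‖g ω‖ ^ (1 + β)) P := by
    have hle : ENNReal.ofReal (1 + β) ≤ 2 := by
      rw [show (2:ℝ≥0∞) = ENNReal.ofReal 2 by norm_num]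
      exact ENNReal.ofReal_le_ofReal (by linarith)
    have hmem := hg.mono_exponent hle
    have hne0 : ENNReal.ofReal (1 + β) ≠ 0 := (ENNReal.ofReal_pos.mpr h1β).ne'
    have h := hmem.norm_rpow hne0 ENNReal.ofReal_ne_top
    refine (integrable_congr ?_).mp (memLp_one_iff_integrable.mp h)
    filter_upwards with ω
    rw [ENNReal.toReal_ofReal h1β.le]
  -- the gradient iterate and coordinates
  set f' : Ω → EuclideanSpace ℝ (Fin d) := fun ω => J' (θ ω) with hf'def
  have hf'asm : AEStronglyMeasurable[mΩ] f' P :=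
    ((stronglyMeasurable_condExp.mono h𝒢).aestronglyMeasurable).congr hgmean
  set u : Fin d → Ω → ℝ := fun i ω => f' ω i with hudef
  set v : Fin d → Ω → ℝ := fun i ω => g ω i with hvdef
  have huG : ∀ i, AEStronglyMeasurable[𝒢] (u i) P := by
    intro i
    refine ⟨fun ω => (P[g|𝒢]) ω i,
      (EuclideanSpace.proj i).continuous.comp_stronglyMeasurable stronglyMeasurable_condExp, ?_⟩
    filter_upwards [hgmean] with ω hω
    show u i ω = ((P[g|𝒢]) ω) i
    rw [hω]
  have hu_asm : ∀ i, AEStronglyMeasurable[mΩ] (u i) P := fun i =>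
    (((huG i).stronglyMeasurable_mk.mono h𝒢).aestronglyMeasurable).congr ((huG i).ae_eq_mk).symm
  have hu_bound : ∀ i ω, |u i ω| ≤ C := fun i ω =>
    le_trans (stmt6_coord_le_norm (f' ω) i) (hgrad (θ ω))
  have hv_asm : ∀ i, AEStronglyMeasurable[mΩ] (v i) P := fun i =>
    (EuclideanSpace.proj i).continuous.comp_aestronglyMeasurable hgm
  have hv_int : ∀ i, Integrable (v i) P := fun i =>
    Integrable.mono' hgn1 (hv_asm i)
      (Filter.Eventually.of_forall fun ω => stmt6_coord_le_norm (g ω) i)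
  have huv_int : ∀ i, Integrable (fun ω => u i ω * v i ω) P := fun i =>
    Integrable.mono' (hgn1.const_mul C) ((hu_asm i).mul (hv_asm i))
      (Filter.Eventually.of_forall fun ω => by
        rw [Real.norm_eq_abs, abs_mul]
        exact mul_le_mul (hu_bound i ω) (stmt6_coord_le_norm (g ω) i) (abs_nonneg _) hC0)
  -- the inner product term
  set K : Ω → ℝ := fun ω => ⟪f' ω, g ω⟫ with hKdef
  have hKsum : K = ∑ i, fun ω => u i ω * v i ω := by
    funext ω
    rw [Finset.sum_apply]
    simp [hKdef, hudef, hvdef, PiLp.inner_apply, RCLike.inner_apply]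
    exact Finset.sum_congr rfl fun _ _ => mul_comm _ _
  have hK_int : Integrable K P := by
    rw [hKsum]
    exact integrable_finset_sum' _ fun i _ => huv_int i
  -- conditional expectation of the inner product term
  have h_coord : ∀ i, P[v i|𝒢] =ᵐ[P] u i := by
    intro i
    refine (stmt6_condexp_clm h𝒢 (EuclideanSpace.proj i) hgint).symm.trans ?_
    filter_upwards [hgmean] with ω hω
    show ((P[g|𝒢]) ω) i = u i ω
    rw [hω]
  have h_pull : ∀ i, P[fun ω => u i ω * v i ω|𝒢] =ᵐ[P] fun ω => u i ω * u i ω := by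
    intro i
    have h := condExp_stronglyMeasurable_mul_of_bound₀ h𝒢 (huG i) (hv_int i) C
      (Filter.Eventually.of_forall fun ω => by
        rw [Real.norm_eq_abs]; exact hu_bound i ω)
    refine h.trans ?_
    filter_upwards [h_coord i] with ω hω
    simp only [Pi.mul_apply, hω]
  have hKcond : P[K|𝒢] =ᵐ[P] fun ω => ‖f' ω‖ ^ 2 := by
    rw [hKsum]
    refine (condExp_finsetSum (fun i _ => huv_int i) 𝒢).trans ?_
    have hall : ∀ᵐ ω ∂P, ∀ i, (P[fun ω' => u i ω' * v i ω'|𝒢]) ω = u i ω * u i ω :=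
      ae_all_iff.mpr fun i => h_pull i
    filter_upwards [hall] with ω hω
    rw [Finset.sum_apply]
    rw [Finset.sum_congr rfl fun i _ => hω i]
    exact stmt6_sum_mul_self (f' ω)
  -- pointwise smoothness inequality
  set F : Ω → ℝ := fun ω => J (θ ω + η • g ω) with hFdef
  set R : Ω → ℝ := (fun ω => J (θ ω)) + η • K -
    MJ • ((η ^ (1 + β)) • (fun ω => ‖g ω‖ ^ (1 + β)) + (η ^ 2) • (fun ω => ‖g ω‖ ^ 2) +
      (η * lam) • fun ω => ‖g ω‖) with hRdef
  have key : ∀ ω, R ω ≤ F ω := by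
    intro ω
    have h := hsmooth (θ ω + η • g ω) (θ ω)
    rw [add_sub_cancel_left] at h
    have hn : ‖η • g ω‖ = η * ‖g ω‖ := by
      rw [norm_smul, Real.norm_eq_abs, abs_of_pos hη]
    have hr : (η * ‖g ω‖) ^ (1 + β) = η ^ (1 + β) * ‖g ω‖ ^ (1 + β) :=
      Real.mul_rpow hη.le (norm_nonneg _)
    have hi : ⟪J' (θ ω), η • g ω⟫ = η * K ω := by
      rw [real_inner_smul_right]
    rw [hn, hr, hi, mul_pow] at h
    have h2 := (abs_le.mp h).1
    simp only [hRdef, hFdef, Pi.sub_apply, Pi.add_apply, Pi.smul_apply, smul_eq_mul]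
    linarith
  -- integrability of everything
  have hJθ_sm : StronglyMeasurable[𝒢] fun ω => J (θ ω) :=
    (hJcont.measurable.comp hθ).stronglyMeasurable
  have hJθ_int : Integrable (fun ω => J (θ ω)) P :=
    Integrable.mono' (integrable_const Jmax) ((hJθ_sm.mono h𝒢).aestronglyMeasurable)
      (Filter.Eventually.of_forall fun ω => by rw [Real.norm_eq_abs]; exact hJbdd _)
  have hF_int : Integrable F P := by
    have hsum : AEStronglyMeasurable[mΩ] (fun ω => θ ω + η • g ω) P :=
      (hθm.aestronglyMeasurable.add (hgm.const_smul η) :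
        AEStronglyMeasurable[mΩ] (θ + η • g) P)
    refine Integrable.mono' (integrable_const Jmax)
      (hJcont.comp_aestronglyMeasurable hsum)
      (Filter.Eventually.of_forall fun ω => by rw [Real.norm_eq_abs]; exact hJbdd _)
  have hS_int : Integrable ((η ^ (1 + β)) • (fun ω => ‖g ω‖ ^ (1 + β)) +
      (η ^ 2) • (fun ω => ‖g ω‖ ^ 2) + (η * lam) • fun ω => ‖g ω‖) P :=
    ((hgnβ.smul _).add (hgn2.smul _)).add (hgn1.smul _)
  have hR_int : Integrable R P := by
    rw [hRdef]
    exact (hJθ_int.add (hK_int.smul η)).sub (hS_int.smul MJ)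
  -- conditional expectation computation
  have hmono : ∀ᵐ ω ∂P, (P[R|𝒢]) ω ≤ (P[F|𝒢]) ω :=
    condExp_mono hR_int hF_int (Filter.Eventually.of_forall key)
  have hRc : P[R|𝒢] =ᵐ[P] (fun ω => J (θ ω)) + η • P[K|𝒢] -
      MJ • ((η ^ (1 + β)) • P[fun ω => ‖g ω‖ ^ (1 + β)|𝒢] +
        (η ^ 2) • P[fun ω => ‖g ω‖ ^ 2|𝒢] + (η * lam) • P[fun ω => ‖g ω‖|𝒢]) := by
    rw [hRdef]
    refine (condExp_sub (hJθ_int.add (hK_int.smul η)) (hS_int.smul MJ) 𝒢).trans ?_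
    refine Filter.EventuallyEq.sub ?_ ?_
    · refine (condExp_add hJθ_int (hK_int.smul η) 𝒢).trans ?_
      rw [condExp_of_stronglyMeasurable h𝒢 hJθ_sm hJθ_int]
      exact Filter.EventuallyEq.add (Filter.EventuallyEq.rfl) (condExp_smul η K 𝒢)
    · refine (condExp_smul MJ _ 𝒢).trans ?_
      refine Filter.EventuallyEq.const_smul ?_ MJ
      refine (condExp_add ((hgnβ.smul _).add (hgn2.smul _)) (hgn1.smul _) 𝒢).trans ?_
      refine Filter.EventuallyEq.add ?_ (condExp_smul _ _ 𝒢)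
      refine (condExp_add (hgnβ.smul _) (hgn2.smul _) 𝒢).trans ?_
      exact Filter.EventuallyEq.add (condExp_smul _ _ 𝒢) (condExp_smul _ _ 𝒢)
  -- combine
  have hrpow0 : 0 ≤ η ^ (1 + β) := Real.rpow_nonneg hη.le _
  filter_upwards [hmono, hRc, hKcond, hg1, hg1β, hg2] with ω h₁ h₂ h₃ h₄ h₅ h₆
  have h₂' : (P[R|𝒢]) ω = J (θ ω) + η * (P[K|𝒢]) ω -
      MJ * (η ^ (1 + β) * (P[fun ω' => ‖g ω'‖ ^ (1 + β)|𝒢]) ω +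
        η ^ 2 * (P[fun ω' => ‖g ω'‖ ^ 2|𝒢]) ω + η * lam * (P[fun ω' => ‖g ω'‖|𝒢]) ω) := by
    rw [h₂]; simp [smul_eq_mul]; ring
  have hbound : MJ * (η ^ (1 + β) * (P[fun ω' => ‖g ω'‖ ^ (1 + β)|𝒢]) ω +
        η ^ 2 * (P[fun ω' => ‖g ω'‖ ^ 2|𝒢]) ω + η * lam * (P[fun ω' => ‖g ω'‖|𝒢]) ω)
      ≤ MJ * (η ^ (1 + β) * D1β + η ^ 2 * D₂ + η * lam * D₁) := by
    apply mul_le_mul_of_nonneg_left _ hMJ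
    have t1 := mul_le_mul_of_nonneg_left h₅ hrpow0
    have t2 := mul_le_mul_of_nonneg_left h₆ (sq_nonneg η)
    have t3 := mul_le_mul_of_nonneg_left h₄ (by positivity : (0:ℝ) ≤ η * lam)
    linarith
  have : J (θ ω) + η * ‖f' ω‖ ^ 2 - MJ * (η ^ (1 + β) * D1β + η ^ 2 * D₂ + η * lam * D₁)
      ≤ (P[R|𝒢]) ω := by
    rw [h₂', h₃]
    linarith
  exact le_trans this h₁
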